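/- Let $v$ be a four-velocity with Minkowski normalization $M(v,v)=-1$, $0 < c \le 1$, and let $g$ be the induced metric on $\Sigma_t$ with components $g_{ab} = \{c^{-2}\delta_{ab} + (c^{-2}-1)(v_\flat)_a(v_\flat)_b\}\{c^2 - (c^2-1)(v^0)^2\}$ and inverse $(g^{-1})^{ab} = \{c^2 - (c^2-1)(v^0)^2\}^{-2}\{c^2\delta^{ab}[c^2 - (c^2-1)(v^0)^2] + c^2(c^2-1)v^a v^b\}$. Then for every $\xi \in \mathbb{R}^3$: $\{c^2\delta^{ab}[c^2-(c^2-1)(v^0)^2] + c^2(c^2-1)v^a v^b\}\xi_a\xi_b \ge c^4 |\xi|^2$; in particular $g^{-1}$ (and hence $g$) is positive definite. -/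
import Mathlib

open Finset

/-- Numerator of the inverse induced metric on `Σ_t`:
`c²δ^{ab}[c² - (c²-1)(v⁰)²] + c²(c²-1)v^a v^b`. -/
noncomputable def ginvNum (c : ℝ) (v : Fin 4 → ℝ) (a b : Fin 3) : ℝ :=
  c ^ 2 * (if a = b then 1 else 0) * (c ^ 2 - (c ^ 2 - 1) * (v 0) ^ 2) +
    c ^ 2 * (c ^ 2 - 1) * v a.succ * v b.succ

/-- The inverse induced metric `(g⁻¹)^{ab}` on constant-time slices. -/
noncomputable def ginvSp (c : ℝ) (v : Fin 4 → ℝ) (a b : Fin 3) : ℝ :=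
  ginvNum c v a b / (c ^ 2 - (c ^ 2 - 1) * (v 0) ^ 2) ^ 2

/-- The induced metric `g_{ab}` on constant-time slices. -/
noncomputable def gSp (c : ℝ) (v : Fin 4 → ℝ) (a b : Fin 3) : ℝ :=
  ((c ^ 2)⁻¹ * (if a = b then 1 else 0) + ((c ^ 2)⁻¹ - 1) * v a.succ * v b.succ) *
    (c ^ 2 - (c ^ 2 - 1) * (v 0) ^ 2)

/-- coercivity of the induced metric on `Σ_t`:
the numerator of the quadratic form of `g⁻¹` is bounded below by `c⁴|ξ|²`, and
both `g⁻¹` and `g` are positive definite. -/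
theorem stmt2 (c : ℝ) (v : Fin 4 → ℝ) (hc0 : 0 < c) (hc1 : c ≤ 1)
    (hv : -(v 0) ^ 2 + ∑ i : Fin 3, (v i.succ) ^ 2 = -1) :
    ∀ ξ : Fin 3 → ℝ,
      (c ^ 4 * ∑ i, (ξ i) ^ 2 ≤ ∑ a, ∑ b, ginvNum c v a b * ξ a * ξ b) ∧
      (ξ ≠ 0 → 0 < ∑ a, ∑ b, ginvSp c v a b * ξ a * ξ b) ∧
      (ξ ≠ 0 → 0 < ∑ a, ∑ b, gSp c v a b * ξ a * ξ b) := by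
  intro ξ
  have hc2 : c ^ 2 ≤ 1 := by nlinarith
  have hv0 : (v 0) ^ 2 = 1 + ((v 1)^2 + (v 2)^2 + (v 3)^2) := by
    have h := hv
    simp only [Fin.sum_univ_three, show ((0:Fin 3).succ = 1) from rfl,
      show ((1:Fin 3).succ = 2) from rfl, show ((2:Fin 3).succ = 3) from rfl] at h
    linarith
  have hs : 0 ≤ (v 1)^2 + (v 2)^2 + (v 3)^2 := by positivity
  have hD : 0 < c ^ 2 - (c ^ 2 - 1) * (v 0) ^ 2 := by
    rw [hv0]
    nlinarith [mul_nonneg (sub_nonneg.2 hc2) hs]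
  have hnum : ∑ a, ∑ b, ginvNum c v a b * ξ a * ξ b =
      c ^ 2 * (c ^ 2 - (c ^ 2 - 1) * (v 0) ^ 2) * ((ξ 0)^2 + (ξ 1)^2 + (ξ 2)^2) +
      c ^ 2 * (c ^ 2 - 1) * (v 1 * ξ 0 + v 2 * ξ 1 + v 3 * ξ 2)^2 := by
    simp [Fin.sum_univ_three, ginvNum, Fin.succ]
    ring
  have hxi : ∑ i, (ξ i) ^ 2 = (ξ 0)^2 + (ξ 1)^2 + (ξ 2)^2 := by
    simp [Fin.sum_univ_three]
  have hCS : (v 1 * ξ 0 + v 2 * ξ 1 + v 3 * ξ 2)^2 ≤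
      ((v 1)^2 + (v 2)^2 + (v 3)^2) * ((ξ 0)^2 + (ξ 1)^2 + (ξ 2)^2) := by
    nlinarith [sq_nonneg (v 1 * ξ 1 - v 2 * ξ 0), sq_nonneg (v 1 * ξ 2 - v 3 * ξ 0),
      sq_nonneg (v 2 * ξ 2 - v 3 * ξ 1)]
  have hkey : 0 ≤ c ^ 2 * (1 - c ^ 2) *
      ((1 + ((v 1)^2 + (v 2)^2 + (v 3)^2)) * ((ξ 0)^2 + (ξ 1)^2 + (ξ 2)^2) -
        (v 1 * ξ 0 + v 2 * ξ 1 + v 3 * ξ 2)^2) := by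
    apply mul_nonneg (mul_nonneg (by positivity) (by linarith))
    nlinarith [sq_nonneg (ξ 0), sq_nonneg (ξ 1), sq_nonneg (ξ 2)]
  have key : c ^ 4 * ∑ i, (ξ i) ^ 2 ≤ ∑ a, ∑ b, ginvNum c v a b * ξ a * ξ b := by
    rw [hnum, hxi, hv0]
    nlinarith [hkey]
  have hxipos : ξ ≠ 0 → 0 < (ξ 0)^2 + (ξ 1)^2 + (ξ 2)^2 := by
    intro hne
    obtain ⟨i, hi⟩ := Function.ne_iff.1 hne
    fin_cases i
    · have h0 : ξ 0 ≠ 0 := hi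
      have : 0 < (ξ 0)^2 := (sq_nonneg _).lt_of_ne (Ne.symm (pow_ne_zero 2 h0))
      linarith [sq_nonneg (ξ 1), sq_nonneg (ξ 2)]
    · have h0 : ξ 1 ≠ 0 := hi
      have : 0 < (ξ 1)^2 := (sq_nonneg _).lt_of_ne (Ne.symm (pow_ne_zero 2 h0))
      linarith [sq_nonneg (ξ 0), sq_nonneg (ξ 2)]
    · have h0 : ξ 2 ≠ 0 := hi
      have : 0 < (ξ 2)^2 := (sq_nonneg _).lt_of_ne (Ne.symm (pow_ne_zero 2 h0))
      linarith [sq_nonneg (ξ 0), sq_nonneg (ξ 1)]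
  refine ⟨key, ?_, ?_⟩
  · intro hne
    have hsum : ∑ a, ∑ b, ginvSp c v a b * ξ a * ξ b =
        (∑ a, ∑ b, ginvNum c v a b * ξ a * ξ b) /
          (c ^ 2 - (c ^ 2 - 1) * (v 0) ^ 2) ^ 2 := by
      rw [Finset.sum_div]
      refine Finset.sum_congr rfl fun a _ => ?_
      rw [Finset.sum_div]
      refine Finset.sum_congr rfl fun b _ => ?_
      rw [ginvSp, div_mul_eq_mul_div, div_mul_eq_mul_div]
    rw [hsum]
    apply div_pos _ (by positivity)
    calc (0:ℝ) < c ^ 4 * ∑ i, (ξ i) ^ 2 := by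
          rw [hxi]; exact mul_pos (by positivity) (hxipos hne)
      _ ≤ _ := key
  · intro hne
    have hg : ∑ a, ∑ b, gSp c v a b * ξ a * ξ b =
        ((c ^ 2)⁻¹ * ((ξ 0)^2 + (ξ 1)^2 + (ξ 2)^2) +
         ((c ^ 2)⁻¹ - 1) * (v 1 * ξ 0 + v 2 * ξ 1 + v 3 * ξ 2)^2) *
          (c ^ 2 - (c ^ 2 - 1) * (v 0) ^ 2) := by
      simp [Fin.sum_univ_three, gSp, Fin.succ]
      ring
    rw [hg]
    have hcinv : (1:ℝ) ≤ (c ^ 2)⁻¹ := (one_le_inv₀ (by positivity)).mpr hc2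
    apply mul_pos _ hD
    have h1 : 0 < (c ^ 2)⁻¹ * ((ξ 0)^2 + (ξ 1)^2 + (ξ 2)^2) :=
      mul_pos (by positivity) (hxipos hne)
    have h2 : 0 ≤ ((c ^ 2)⁻¹ - 1) * (v 1 * ξ 0 + v 2 * ξ 1 + v 3 * ξ 2)^2 :=
      mul_nonneg (by linarith) (sq_nonneg _)
    linarith
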